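/- For every n ≥ 1, all x_1,…,x_n, and every permutation σ of {1,…,n} with σ ≠ id, the fixed-boundary colored partition function at t = 0 vanishes: Z̃^σ_n(x_1,…,x_n|0) = 0. Consequently the free-boundary partition function at t = 0 equals the identity-permutation one: Z̃_n(x_1,…,x_n|0) = Z̃^{id}_n(x_1,…,x_n|0). -/

import Mathlib

open Finset

/-- `d(s_N, s_E)` = number of pairs `(i,j)` with `i < j`, `i ∈ s_E`, `j ∈ s_N ∪ s_E`. -/
def dNE {n : ℕ} (sN sE : Finset (Fin n)) : ℕ :=
  (Finset.univ.filter fun p : Fin n × Fin n => p.1 < p.2 ∧ p.1 ∈ sE ∧ p.2 ∈ sN ∪ sE).card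

/-- Colored vertex weight `w̃(s_W,s_S,s_N,s_E; x, t) = x^{|s_E|} t^{d(s_N,s_E)}` when the
configuration is admissible, and `0` otherwise. -/
def coloredVertexW {R : Type*} [CommRing R] {n : ℕ} (x t : R)
    (sW sS sN sE : Finset (Fin n)) : R :=
  if sS ∩ sW = ∅ ∧ sN ∩ sE = ∅ ∧ sN ∪ sE = sS ∪ sW then
    x ^ sE.card * t ^ dNE sN sE
  else 0

/-- Weight of a colored configuration on the `n × n` grid (rows bottom-to-top, row `i`
uses parameter `x i`). -/
def coloredConfigW {R : Type*} [CommRing R] {n : ℕ} (x : Fin n → R) (t : R)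
    (H : Fin n → Fin (n + 1) → Finset (Fin n))
    (V : Fin (n + 1) → Fin n → Finset (Fin n)) : R :=
  ∏ i : Fin n, ∏ j : Fin n,
    coloredVertexW (x i) t (H i j.castSucc) (V i.castSucc j) (V i.succ j) (H i j.succ)

/-- Fixed-boundary colored domain-wall partition function `Z̃^σ_n(x|t)`: color `i` enters
on the west boundary at the `i`-th horizontal edge from the top, the path of color `i`
exits the north boundary in column `σ(i)`, the south and east boundary edges carry no
colors. -/
def coloredZperm {R : Type*} [CommRing R] (n : ℕ) (x : Fin n → R) (t : R)
    (σ : Equiv.Perm (Fin n)) : R :=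
  ∑ c ∈ (Finset.univ : Finset ((Fin n → Fin (n + 1) → Finset (Fin n)) ×
        (Fin (n + 1) → Fin n → Finset (Fin n)))).filter
      (fun c => (∀ i : Fin n, c.1 i 0 = {Fin.rev i}) ∧
        (∀ i : Fin n, c.1 i (Fin.last n) = ∅) ∧
        (∀ j : Fin n, c.2 0 j = ∅) ∧
        (∀ a : Fin n, c.2 (Fin.last n) (σ a) = {a})),
    coloredConfigW x t c.1 c.2

/-- Free-boundary colored domain-wall partition function `Z̃_n(x|t)` (the north-boundary
coloring is free: exactly one color exits through each north vertical edge). -/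
def coloredZfree {R : Type*} [CommRing R] (n : ℕ) (x : Fin n → R) (t : R) : R :=
  ∑ c ∈ (Finset.univ : Finset ((Fin n → Fin (n + 1) → Finset (Fin n)) ×
        (Fin (n + 1) → Fin n → Finset (Fin n)))).filter
      (fun c => (∀ i : Fin n, c.1 i 0 = {Fin.rev i}) ∧
        (∀ i : Fin n, c.1 i (Fin.last n) = ∅) ∧
        (∀ j : Fin n, c.2 0 j = ∅) ∧
        (∀ j : Fin n, (c.2 (Fin.last n) j).card = 1)),
    coloredConfigW x t c.1 c.2

section aux
variable {n : ℕ}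

/-- A vertex configuration is admissible. -/
def Adm (sW sS sN sE : Finset (Fin n)) : Prop :=
  sS ∩ sW = ∅ ∧ sN ∩ sE = ∅ ∧ sN ∪ sE = sS ∪ sW

/-- All vertices are admissible and have `d = 0`. -/
def GoodCfg (H : Fin n → Fin (n + 1) → Finset (Fin n))
    (V : Fin (n + 1) → Fin n → Finset (Fin n)) : Prop :=
  ∀ i j : Fin n,
    Adm (H i j.castSucc) (V i.castSucc j) (V i.succ j) (H i j.succ) ∧
    dNE (V i.succ j) (H i j.succ) = 0

lemma dNE_eq_zero_absurd {sN sE : Finset (Fin n)} (h : dNE sN sE = 0)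
    {c c' : Fin n} (hcc : c < c') (hE : c ∈ sE) (hN : c' ∈ sN ∪ sE) : False := by
  have := Finset.card_eq_zero.mp h
  have hmem : (c, c') ∈ (Finset.univ.filter fun p : Fin n × Fin n =>
      p.1 < p.2 ∧ p.1 ∈ sE ∧ p.2 ∈ sN ∪ sE) := by
    simp only [Finset.mem_filter, Finset.mem_univ, true_and]
    exact ⟨hcc, hE, hN⟩
  rw [this] at hmem
  exact absurd hmem (Finset.notMem_empty _)

variable {H : Fin n → Fin (n + 1) → Finset (Fin n)}
  {V : Fin (n + 1) → Fin n → Finset (Fin n)}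

/-- Conservation of colors: at level `l`, color `a` appears exactly once among the
vertical edges iff it has already entered (i.e. `rev a < l`). -/
lemma conservation (hG : GoodCfg H V) (hW : ∀ i : Fin n, H i 0 = {Fin.rev i})
    (hE : ∀ i : Fin n, H i (Fin.last n) = ∅) (hS : ∀ j : Fin n, V 0 j = ∅)
    (a : Fin n) :
    ∀ l : Fin (n + 1),
      (∑ j : Fin n, if a ∈ V l j then 1 else 0) =
        (if ((Fin.rev a : Fin n) : ℕ) < (l : ℕ) then 1 else 0) := by
  intro l
  induction l using Fin.induction with
  | zero => simp [hS]
  | succ i ih =>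
    -- per-vertex identity
    have hvert : ∀ j : Fin n,
        ((if a ∈ V i.succ j then 1 else 0) + (if a ∈ H i j.succ then 1 else 0) : ℕ) =
        (if a ∈ V i.castSucc j then 1 else 0) + (if a ∈ H i j.castSucc then 1 else 0) := by
      intro j
      obtain ⟨h1, h2, h3⟩ := (hG i j).1
      by_cases hN : a ∈ V i.succ j <;> by_cases hEe : a ∈ H i j.succ <;>
        by_cases hSs : a ∈ V i.castSucc j <;> by_cases hWw : a ∈ H i j.castSucc <;>
        simp_all [Finset.eq_empty_iff_forall_notMem, Finset.ext_iff] <;>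
        first
        | (exact absurd ⟨hN, hEe⟩ (by simpa using h2 a))
        | (exact absurd ⟨hSs, hWw⟩ (by simpa using h1 a))
        | (have := (h3 a); simp_all)
    have hsum : (∑ j : Fin n, if a ∈ V i.succ j then 1 else 0) +
        (∑ j : Fin n, if a ∈ H i j.succ then 1 else 0) =
        (∑ j : Fin n, if a ∈ V i.castSucc j then 1 else 0) +
        (∑ j : Fin n, if a ∈ H i j.castSucc then 1 else 0) := by
      rw [← Finset.sum_add_distrib, ← Finset.sum_add_distrib]
      exact Finset.sum_congr rfl fun j _ => hvert j
    have htel_succ : (∑ m : Fin (n + 1), if a ∈ H i m then 1 else 0) =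
        (if a ∈ H i 0 then 1 else 0) + ∑ j : Fin n, if a ∈ H i j.succ then 1 else 0 :=
      Fin.sum_univ_succ _
    have htel_cast : (∑ m : Fin (n + 1), if a ∈ H i m then 1 else 0) =
        (∑ j : Fin n, if a ∈ H i j.castSucc then 1 else 0) +
          (if a ∈ H i (Fin.last n) then 1 else 0) :=
      Fin.sum_univ_castSucc _
    have h0 : (if a ∈ H i 0 then 1 else 0 : ℕ) = if a = Fin.rev i then 1 else 0 := by
      rw [hW i]; simp
    have hl : (if a ∈ H i (Fin.last n) then 1 else 0 : ℕ) = 0 := by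
      rw [hE i]; simp
    rw [ih] at hsum
    have hrev : (a = Fin.rev i) ↔ ((Fin.rev a : Fin n) : ℕ) = (i : ℕ) := by
      constructor
      · rintro rfl; rw [Fin.rev_rev]
      · intro h; have : Fin.rev a = i := Fin.ext h
        rw [← this, Fin.rev_rev]
    have hcs : ((i.castSucc : Fin (n+1)) : ℕ) = (i : ℕ) := rfl
    have hsc : ((i.succ : Fin (n+1)) : ℕ) = (i : ℕ) + 1 := rfl
    rw [hcs] at hsum
    rw [hsc]
    rw [hl] at htel_cast
    rw [h0] at htel_succ
    by_cases hh : a = Fin.rev i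
    · have h1 := hrev.mp hh
      rw [if_pos hh] at htel_succ
      rw [if_neg (by omega)] at hsum
      rw [if_pos (by omega)]
      omega
    · rw [if_neg hh] at htel_succ
      by_cases h2 : ((Fin.rev a : Fin n) : ℕ) < (i : ℕ)
      · rw [if_pos h2] at hsum; rw [if_pos (by omega)]; omega
      · have h1 : ((Fin.rev a : Fin n) : ℕ) ≠ (i : ℕ) := fun hx => hh (hrev.mpr hx)
        rw [if_neg h2] at hsum; rw [if_neg (by omega)]; omega


variable (hG : GoodCfg H V) (hW : ∀ i : Fin n, H i 0 = {Fin.rev i})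
  (hE : ∀ i : Fin n, H i (Fin.last n) = ∅) (hS : ∀ j : Fin n, V 0 j = ∅)

include hG hW hE hS in
lemma mem_V_rev_lt {a : Fin n} {l : Fin (n + 1)} {j : Fin n} (h : a ∈ V l j) :
    ((Fin.rev a : Fin n) : ℕ) < (l : ℕ) := by
  by_contra hc
  have hcons := conservation hG hW hE hS a l
  rw [if_neg hc] at hcons
  have := Finset.sum_eq_zero_iff.mp hcons j (Finset.mem_univ j)
  rw [if_pos h] at this
  exact one_ne_zero this

include hG hW hE hS in
lemma mem_V_unique {a : Fin n} {l : Fin (n + 1)} {j j' : Fin n}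
    (h : a ∈ V l j) (h' : a ∈ V l j') : j = j' := by
  by_contra hne
  have hcons := conservation hG hW hE hS a l
  rw [if_pos (mem_V_rev_lt hG hW hE hS h)] at hcons
  have h1 : (∑ k : Fin n, if a ∈ V l k then 1 else 0) =
      (if a ∈ V l j then 1 else 0) + ∑ k ∈ Finset.univ.erase j, (if a ∈ V l k then 1 else 0) :=
    (Finset.add_sum_erase _ _ (Finset.mem_univ j)).symm
  have h2 : (if a ∈ V l j' then 1 else 0 : ℕ) ≤
      ∑ k ∈ Finset.univ.erase j, (if a ∈ V l k then 1 else 0) :=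
    Finset.single_le_sum (f := fun k => if a ∈ V l k then (1:ℕ) else 0)
      (fun k _ => Nat.zero_le _)
      (Finset.mem_erase.mpr ⟨fun hx => hne hx.symm, Finset.mem_univ _⟩)
  rw [if_pos h] at h1
  rw [if_pos h'] at h2
  omega

include hG hW hE hS in
lemma mem_V_exists {a : Fin n} {l : Fin (n + 1)} (h : ((Fin.rev a : Fin n) : ℕ) < (l : ℕ)) :
    ∃ j : Fin n, a ∈ V l j := by
  have hcons := conservation hG hW hE hS a l
  rw [if_pos h] at hcons
  by_contra hc
  push_neg at hc
  have : (∑ j : Fin n, if a ∈ V l j then 1 else 0) = 0 :=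
    Finset.sum_eq_zero fun j _ => if_neg (hc j)
  omega

include hG hW in
/-- Trace a color back (westwards) through a row. -/
lemma trace [NeZero n] (i : Fin n) (c : Fin n) :
    ∀ (N : ℕ) (j : Fin n), (j : ℕ) ≤ N → (c ∈ V i.succ j ∨ c ∈ H i j.succ) →
    ∃ m : Fin n, m ≤ j ∧ (c ∈ V i.castSucc m ∨ (c = Fin.rev i ∧ m = 0)) ∧
      ∀ k : Fin n, m ≤ k → k < j → c ∈ H i k.succ := by
  intro N
  induction N with
  | zero =>
    intro j hj hc
    have hj0 : j = 0 := Fin.ext (by simpa using Nat.le_zero.mp hj)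
    subst hj0
    have hmem : c ∈ V i.castSucc 0 ∪ H i (0 : Fin n).castSucc := by
      rw [(hG i 0).1.2.2.symm]
      exact Finset.mem_union.mpr hc
    rcases Finset.mem_union.mp hmem with hs | hw
    · exact ⟨0, le_refl _, Or.inl hs, fun k hk1 hk2 => absurd hk2 (by simp [Fin.lt_def])⟩
    · have : (0 : Fin n).castSucc = (0 : Fin (n+1)) := rfl
      rw [this, hW i] at hw
      exact ⟨0, le_refl _, Or.inr ⟨Finset.mem_singleton.mp hw, rfl⟩,
        fun k hk1 hk2 => absurd hk2 (by simp [Fin.lt_def])⟩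
  | succ N ih =>
    intro j hj hc
    have hmem : c ∈ V i.castSucc j ∪ H i j.castSucc := by
      rw [(hG i j).1.2.2.symm]
      exact Finset.mem_union.mpr hc
    rcases Finset.mem_union.mp hmem with hs | hw
    · exact ⟨j, le_refl _, Or.inl hs, fun k hk1 hk2 =>
        absurd (lt_of_le_of_lt hk1 hk2) (lt_irrefl _)⟩
    · by_cases hj0 : j = 0
      · subst hj0
        have : (0 : Fin n).castSucc = (0 : Fin (n+1)) := rfl
        rw [this, hW i] at hw
        exact ⟨0, le_refl _, Or.inr ⟨Finset.mem_singleton.mp hw, rfl⟩,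
          fun k hk1 hk2 => absurd hk2 (by simp [Fin.lt_def])⟩
      · have hjpos : 0 < (j : ℕ) := Nat.pos_of_ne_zero (fun h => hj0 (Fin.ext h))
        set j₀ : Fin n := ⟨(j : ℕ) - 1, by omega⟩ with hj₀
        have hcast : j.castSucc = j₀.succ := by
          apply Fin.ext
          simp [Fin.val_succ, hj₀]
          omega
        rw [hcast] at hw
        obtain ⟨m, hm1, hm2, hm3⟩ := ih j₀ (show (j : ℕ) - 1 ≤ N by omega) (Or.inr hw)
        refine ⟨m, ?_, hm2, ?_⟩
        · exact le_trans hm1 (show ((j : ℕ) - 1 : ℕ) ≤ (j : ℕ) by omega : j₀ ≤ j)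
        · intro k hk1 hk2
          have hkj : (k : ℕ) < (j : ℕ) := hk2
          rcases lt_or_eq_of_le (show (k : ℕ) ≤ (j₀ : ℕ) from
              le_trans (Nat.le_sub_one_of_lt hkj) (le_refl _)) with hlt | heq
          · exact hm3 k hk1 (by rwa [Fin.lt_def])
          · have : k = j₀ := Fin.ext heq
            rw [this]; exact hw

include hG hW hE hS in
/-- Order preservation: at every level, smaller colors are weakly to the left. -/
lemma ordered [NeZero n] :
    ∀ l : Fin (n + 1), ∀ c c' j j' : Fin n,
      c < c' → c ∈ V l j → c' ∈ V l j' → j ≤ j' := by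
  intro l
  induction l using Fin.induction with
  | zero => intro c c' j j' _ h1 _; rw [hS j] at h1; exact absurd h1 (Finset.notMem_empty _)
  | succ i ih =>
    intro c c' j j' hcc h1 h2
    by_contra hlt
    push_neg at hlt
    obtain ⟨m, hm1, hm2, hm3⟩ := trace hG hW i c (j : ℕ) j (le_refl _) (Or.inl h1)
    obtain ⟨m', hm'1, hm'2, hm'3⟩ := trace hG hW i c' (j' : ℕ) j' (le_refl _) (Or.inl h2)
    have hmj' : m ≤ j' := by
      rcases hm2 with hsouth | ⟨hwest, hm0⟩
      · rcases hm'2 with hsouth' | ⟨hwest', _⟩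
        · exact le_trans (ih c c' m m' hcc hsouth hsouth') hm'1
        · -- c from south means rev c < i, but c' = rev i and c < c' gives contradiction
          exfalso
          have hlt1 : ((Fin.rev c : Fin n) : ℕ) < ((i.castSucc : Fin (n+1)) : ℕ) :=
            mem_V_rev_lt hG hW hE hS hsouth
          have hc1 : ((i.castSucc : Fin (n+1)) : ℕ) = (i : ℕ) := rfl
          have hrc : Fin.rev c' < Fin.rev c := Fin.rev_lt_rev.mpr hcc
          rw [hwest', Fin.rev_rev] at hrc
          rw [Fin.lt_def] at hrc
          omega
      · rw [hm0]; exact Fin.zero_le _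
    have hcE : c ∈ H i j'.succ := hm3 j' hmj' hlt
    exact dNE_eq_zero_absurd (hG i j').2 hcc hcE (Finset.mem_union_left _ h2)


include hG hW hE hS in
lemma top_id [NeZero n] (hcard : ∀ j : Fin n, (V (Fin.last n) j).card = 1) :
    ∀ j : Fin n, V (Fin.last n) j = {j} := by
  have hex : ∀ a : Fin n, ∃ j : Fin n, a ∈ V (Fin.last n) j := fun a =>
    mem_V_exists hG hW hE hS (by simpa using (Fin.rev a).isLt)
  choose f hf using hex
  have hinj : Function.Injective f := by
    intro a b hab
    have h1 := hf a
    have h2 := hf b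
    rw [hab] at h1
    exact Finset.card_le_one_iff.mp (le_of_eq (hcard (f b))) h1 h2
  have hmono : StrictMono f := by
    intro a b hab
    have hle : f a ≤ f b := ordered hG hW hE hS (Fin.last n) a b (f a) (f b) hab (hf a) (hf b)
    exact lt_of_le_of_ne hle (fun h => absurd (hinj h) (ne_of_lt hab))
  have hfid : f = id := by
    apply (hmono.range_inj strictMono_id).mp
    rw [Set.range_id]
    exact Set.range_eq_univ.mpr ((Finite.injective_iff_bijective.mp hinj).2)
  intro j
  have hj : j ∈ V (Fin.last n) j := by
    have := hf j
    rwa [show f j = j from congrFun hfid j] at this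
  obtain ⟨y, hy⟩ := Finset.card_eq_one.mp (hcard j)
  rw [hy] at hj ⊢
  rw [Finset.mem_singleton.mp hj]

end aux

section zero
variable {R : Type*} [CommRing R] {n : ℕ}

lemma configW_eq_zero_of_not_good (x : Fin n → R)
    {H : Fin n → Fin (n + 1) → Finset (Fin n)} {V : Fin (n + 1) → Fin n → Finset (Fin n)}
    (hng : ¬ GoodCfg H V) : coloredConfigW x 0 H V = 0 := by
  rw [GoodCfg] at hng
  push_neg at hng
  obtain ⟨i, j, hij⟩ := hng
  apply Finset.prod_eq_zero (Finset.mem_univ i)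
  apply Finset.prod_eq_zero (Finset.mem_univ j)
  rw [coloredVertexW]
  by_cases hadm : V i.castSucc j ∩ H i j.castSucc = ∅ ∧ V i.succ j ∩ H i j.succ = ∅ ∧
      V i.succ j ∪ H i j.succ = V i.castSucc j ∪ H i j.castSucc
  · rw [if_pos hadm]
    have hd : dNE (V i.succ j) (H i j.succ) ≠ 0 := hij hadm
    rw [zero_pow hd, mul_zero]
  · rw [if_neg hadm]

end zero

/-- At `t = 0` the fixed-boundary colored partition function vanishes for every
non-identity permutation; consequently at `t = 0` the free-boundary partition function
equals the identity-permutation one. -/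
theorem coloredZ_t_zero {R : Type*} [CommRing R] (n : ℕ) (hn : 1 ≤ n) (x : Fin n → R) :
    (∀ σ : Equiv.Perm (Fin n), σ ≠ 1 → coloredZperm n x 0 σ = 0) ∧
    coloredZfree n x 0 = coloredZperm n x 0 1 := by
  haveI : NeZero n := ⟨by omega⟩
  have key : ∀ (c : (Fin n → Fin (n + 1) → Finset (Fin n)) ×
      (Fin (n + 1) → Fin n → Finset (Fin n))),
      (∀ i : Fin n, c.1 i 0 = {Fin.rev i}) →
      (∀ i : Fin n, c.1 i (Fin.last n) = ∅) →
      (∀ j : Fin n, c.2 0 j = ∅) →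
      (∀ j : Fin n, (c.2 (Fin.last n) j).card = 1) →
      GoodCfg c.1 c.2 →
      ∀ j : Fin n, c.2 (Fin.last n) j = {j} := by
    intro c hw he hs hcard hg
    exact top_id hg hw he hs hcard
  constructor
  · intro σ hσ
    rw [coloredZperm]
    apply Finset.sum_eq_zero
    intro c hc
    rw [Finset.mem_filter] at hc
    obtain ⟨-, hw, he, hs, hb⟩ := hc
    by_cases hg : GoodCfg c.1 c.2
    · exfalso
      apply hσ
      have hcard : ∀ j : Fin n, (c.2 (Fin.last n) j).card = 1 := by
        intro j
        have := hb (σ⁻¹ j)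
        rw [show σ (σ⁻¹ j) = j from σ.apply_symm_apply j] at this
        rw [this, Finset.card_singleton]
      have htop := key c hw he hs hcard hg
      ext a
      have h1 := hb a
      rw [htop (σ a)] at h1
      exact (Finset.singleton_injective h1).symm ▸ rfl
    · exact configW_eq_zero_of_not_good x hg
  · rw [coloredZfree, coloredZperm]
    symm
    apply Finset.sum_subset
    · intro c hc
      rw [Finset.mem_filter] at hc ⊢
      obtain ⟨hu, hw, he, hs, hb⟩ := hc
      refine ⟨hu, hw, he, hs, fun j => ?_⟩
      have := hb j
      simp only [Equiv.Perm.one_apply] at this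
      rw [this, Finset.card_singleton]
    · intro c hc hnc
      rw [Finset.mem_filter] at hc
      obtain ⟨hu, hw, he, hs, hcard⟩ := hc
      by_cases hg : GoodCfg c.1 c.2
      · exfalso
        apply hnc
        rw [Finset.mem_filter]
        have htop := key c hw he hs hcard hg
        refine ⟨hu, hw, he, hs, fun a => ?_⟩
        simp only [Equiv.Perm.one_apply]
        exact htop a
      · exact configW_eq_zero_of_not_good x hg
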